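/- For a binary mask m ∈ {0,1}^d with exactly k nonzero entries, a fixed vector g ∈ ℝ^d with ‖m ⊙ g‖² = c‖g‖², and z̄ = m ⊙ z with z ~ N(0, I_d), the expected squared norm E[‖(z̄ᵀg) z̄‖²] equals (k + 2) c ‖g‖². -/

import Mathlib

open MeasureTheory ProbabilityTheory Real Filter


noncomputable def Jm (n : ℕ) : ℝ := ∫ x : ℝ, x ^ n * rexp (-(1/2) * x ^ 2)

lemma intA (n : ℕ) : Integrable fun x : ℝ => x ^ n * rexp (-(1/2) * x ^ 2) := by
  have h := integrable_rpow_mul_exp_neg_mul_sq (b := (1/2:ℝ)) (by norm_num) (s := (n:ℝ))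
    (lt_of_lt_of_le neg_one_lt_zero (Nat.cast_nonneg n))
  simpa [Real.rpow_natCast] using h

lemma tendA (k : ℕ) : Tendsto (fun x : ℝ => x ^ k * rexp (-(1/2) * x ^ 2)) atTop (nhds 0) := by
  have h := rpow_mul_exp_neg_mul_sq_isLittleO_exp_neg (b := (1/2:ℝ)) (by norm_num) (k:ℝ)
  have h2 : Tendsto (fun x : ℝ => rexp (-(1/2) * x)) atTop (nhds 0) := by
    apply Real.tendsto_exp_atBot.comp
    exact Tendsto.const_mul_atTop_of_neg (by norm_num) tendsto_id
  have := h.isBigO.trans_tendsto h2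
  simpa [Real.rpow_natCast] using this

lemma tendB (k : ℕ) : Tendsto (fun x : ℝ => x ^ k * rexp (-(1/2) * x ^ 2)) atBot (nhds 0) := by
  have h := ((tendA k).comp tendsto_neg_atBot_atTop).const_mul ((-1:ℝ) ^ k)
  rw [mul_zero] at h
  refine h.congr fun x => ?_
  simp only [Function.comp]
  rw [neg_pow]
  ring_nf
  rw [show ((-1:ℝ))^(k*2) = 1 by rw [mul_comm, pow_mul]; norm_num, mul_one]

lemma hE (x : ℝ) : HasDerivAt (fun y : ℝ => rexp (-(1/2) * y ^ 2)) (-x * rexp (-(1/2) * x ^ 2)) x := by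
  have h1 : HasDerivAt (fun y : ℝ => -(1/2) * y ^ 2) (-x) x := by
    have := (hasDerivAt_pow 2 x).const_mul (-(1/2):ℝ)
    refine this.congr_deriv ?_
    ring
  have := h1.exp
  convert this using 1
  ring

lemma J0 : Jm 0 = Real.sqrt (2 * π) := by
  have h := integral_gaussian (1/2)
  have h2 : π / (1/2 : ℝ) = 2 * π := by ring
  rw [h2] at h
  simpa [Jm] using h

lemma J1 : Jm 1 = 0 := by
  have hderiv : ∀ x : ℝ, HasDerivAt (fun y : ℝ => -rexp (-(1/2) * y ^ 2))
      (x ^ 1 * rexp (-(1/2) * x ^ 2)) x := by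
    intro x
    have := (hE x).neg
    refine this.congr_deriv ?_
    ring
  have ht : Tendsto (fun y : ℝ => -rexp (-(1/2) * y ^ 2)) atTop (nhds 0) := by
    simpa using (tendA 0).neg
  have hb : Tendsto (fun y : ℝ => -rexp (-(1/2) * y ^ 2)) atBot (nhds 0) := by
    simpa using (tendB 0).neg
  have := integral_of_hasDerivAt_of_tendsto hderiv (intA 1) hb ht
  simpa [Jm] using this

lemma J2 : Jm 2 = Real.sqrt (2 * π) := by
  have hderiv : ∀ x : ℝ, HasDerivAt (fun y : ℝ => -(y * rexp (-(1/2) * y ^ 2)))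
      (x ^ 2 * rexp (-(1/2) * x ^ 2) - x ^ 0 * rexp (-(1/2) * x ^ 2)) x := by
    intro x
    have := ((hasDerivAt_id x).mul (hE x)).neg
    refine this.congr_deriv ?_
    simp only [id_eq]
    ring
  have ht : Tendsto (fun y : ℝ => -(y * rexp (-(1/2) * y ^ 2))) atTop (nhds 0) := by
    have := (tendA 1).neg
    simpa [pow_one] using this
  have hb : Tendsto (fun y : ℝ => -(y * rexp (-(1/2) * y ^ 2))) atBot (nhds 0) := by
    have := (tendB 1).neg
    simpa [pow_one] using this
  have key := integral_of_hasDerivAt_of_tendsto hderiv ((intA 2).sub (intA 0)) hb ht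
  rw [integral_sub (intA 2) (intA 0), sub_zero] at key
  have : Jm 2 - Jm 0 = 0 := key
  rw [J0] at this
  linarith

lemma J3 : Jm 3 = 0 := by
  have hderiv : ∀ x : ℝ, HasDerivAt (fun y : ℝ => -((y ^ 2 + 2) * rexp (-(1/2) * y ^ 2)))
      (x ^ 3 * rexp (-(1/2) * x ^ 2)) x := by
    intro x
    have := (((hasDerivAt_pow 2 x).add_const 2).mul (hE x)).neg
    refine this.congr_deriv ?_
    ring
  have ht : Tendsto (fun y : ℝ => -((y ^ 2 + 2) * rexp (-(1/2) * y ^ 2))) atTop (nhds 0) := by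
    have := ((tendA 2).add ((tendA 0).const_mul 2)).neg
    rw [mul_zero, add_zero, neg_zero] at this
    refine this.congr fun x => by ring
  have hb : Tendsto (fun y : ℝ => -((y ^ 2 + 2) * rexp (-(1/2) * y ^ 2))) atBot (nhds 0) := by
    have := ((tendB 2).add ((tendB 0).const_mul 2)).neg
    rw [mul_zero, add_zero, neg_zero] at this
    refine this.congr fun x => by ring
  have := integral_of_hasDerivAt_of_tendsto hderiv (intA 3) hb ht
  simpa [Jm] using this

lemma J4 : Jm 4 = 3 * Real.sqrt (2 * π) := by
  have hderiv : ∀ x : ℝ, HasDerivAt (fun y : ℝ => -((y ^ 3 + 3 * y) * rexp (-(1/2) * y ^ 2)))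
      (x ^ 4 * rexp (-(1/2) * x ^ 2) - 3 * (x ^ 0 * rexp (-(1/2) * x ^ 2))) x := by
    intro x
    have := (((hasDerivAt_pow 3 x).add ((hasDerivAt_id x).const_mul 3)).mul (hE x)).neg
    refine this.congr_deriv ?_
    simp only [id_eq, Pi.add_apply]
    push_cast
    ring
  have ht : Tendsto (fun y : ℝ => -((y ^ 3 + 3 * y) * rexp (-(1/2) * y ^ 2))) atTop (nhds 0) := by
    have := ((tendA 3).add ((tendA 1).const_mul 3)).neg
    rw [mul_zero, add_zero, neg_zero] at this
    refine this.congr fun x => by ring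
  have hb : Tendsto (fun y : ℝ => -((y ^ 3 + 3 * y) * rexp (-(1/2) * y ^ 2))) atBot (nhds 0) := by
    have := ((tendB 3).add ((tendB 1).const_mul 3)).neg
    rw [mul_zero, add_zero, neg_zero] at this
    refine this.congr fun x => by ring
  have key := integral_of_hasDerivAt_of_tendsto hderiv ((intA 4).sub ((intA 0).const_mul 3)) hb ht
  rw [integral_sub (intA 4) ((intA 0).const_mul 3), sub_zero, integral_const_mul] at key
  have : Jm 4 - 3 * Jm 0 = 0 := key
  rw [J0] at this
  linarith


lemma pdf_eq (x : ℝ) : gaussianPDFReal 0 1 x = (Real.sqrt (2 * π))⁻¹ * rexp (-(1/2) * x ^ 2) := by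
  simp only [gaussianPDFReal, NNReal.coe_one, mul_one, sub_zero]
  congr 1
  ring

lemma gauss_int (f : ℝ → ℝ) :
    ∫ x, f x ∂(gaussianReal 0 1) = ∫ x, gaussianPDFReal 0 1 x * f x := by
  rw [gaussianReal_of_var_ne_zero _ one_ne_zero]
  have hmeas : Measurable fun x => (gaussianPDFReal 0 1 x).toNNReal :=
    (measurable_gaussianPDFReal 0 1).real_toNNReal
  have hd : gaussianPDF 0 1 = fun x => ((gaussianPDFReal 0 1 x).toNNReal : ENNReal) := rfl
  rw [hd, integral_withDensity_eq_integral_smul hmeas]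
  refine integral_congr_ae (Filter.Eventually.of_forall fun x => ?_)
  simp [NNReal.smul_def, Real.coe_toNNReal _ (gaussianPDFReal_nonneg 0 1 x)]

lemma gauss_integrable (n : ℕ) : Integrable (fun x : ℝ => x ^ n) (gaussianReal 0 1) := by
  rw [gaussianReal_of_var_ne_zero _ one_ne_zero]
  have hmeas : Measurable fun x => (gaussianPDFReal 0 1 x).toNNReal :=
    (measurable_gaussianPDFReal 0 1).real_toNNReal
  have hd : gaussianPDF 0 1 = fun x => ((gaussianPDFReal 0 1 x).toNNReal : ENNReal) := rfl
  rw [hd, integrable_withDensity_iff_integrable_smul hmeas]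
  refine ((intA n).const_mul ((Real.sqrt (2 * π))⁻¹)).congr
    (Filter.Eventually.of_forall fun x => ?_)
  show (Real.sqrt (2 * π))⁻¹ * (x ^ n * rexp (-(1/2) * x ^ 2))
    = (gaussianPDFReal 0 1 x).toNNReal • x ^ n
  rw [NNReal.smul_def, Real.coe_toNNReal _ (gaussianPDFReal_nonneg 0 1 x), pdf_eq, smul_eq_mul]
  ring

noncomputable def mom (n : ℕ) : ℝ := ∫ x, x ^ n ∂(gaussianReal 0 1)

lemma mom_eq (n : ℕ) : mom n = (Real.sqrt (2 * π))⁻¹ * ∫ x : ℝ, x ^ n * rexp (-(1/2) * x ^ 2) := by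
  rw [mom, gauss_int, ← integral_const_mul]
  refine integral_congr_ae (Filter.Eventually.of_forall fun x => ?_)
  simp only [pdf_eq]
  ring

lemma sqrt_2pi_pos : 0 < Real.sqrt (2 * π) := Real.sqrt_pos.mpr (by positivity)

lemma mom0 : mom 0 = 1 := by
  simp [mom]

lemma mom1 : mom 1 = 0 := by
  have h : (∫ x : ℝ, x ^ 1 * rexp (-(1/2) * x ^ 2)) = 0 := J1
  rw [mom_eq, h, mul_zero]

lemma mom2 : mom 2 = 1 := by
  have h : (∫ x : ℝ, x ^ 2 * rexp (-(1/2) * x ^ 2)) = Real.sqrt (2 * π) := J2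
  rw [mom_eq, h, inv_mul_cancel₀ (ne_of_gt sqrt_2pi_pos)]

lemma mom3 : mom 3 = 0 := by
  have h : (∫ x : ℝ, x ^ 3 * rexp (-(1/2) * x ^ 2)) = 0 := J3
  rw [mom_eq, h, mul_zero]

lemma mom4 : mom 4 = 3 := by
  have h : (∫ x : ℝ, x ^ 4 * rexp (-(1/2) * x ^ 2)) = 3 * Real.sqrt (2 * π) := J4
  rw [mom_eq, h]
  field_simp


lemma integral_pi_gauss (d : ℕ) (f : Fin d → ℝ → ℝ) :
    ∫ z : Fin d → ℝ, ∏ j, f j (z j) ∂(Measure.pi fun _ : Fin d => gaussianReal 0 1)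
      = ∏ j, ∫ x, f j x ∂(gaussianReal 0 1) := by
  letI : MeasureSpace ℝ := ⟨gaussianReal 0 1⟩
  haveI : SigmaFinite (volume : Measure ℝ) := by
    change SigmaFinite (gaussianReal 0 1); infer_instance
  exact MeasureTheory.integral_fin_nat_prod_eq_prod f

lemma integrable_pi_gauss (d : ℕ) (f : Fin d → ℝ → ℝ)
    (hf : ∀ j, Integrable (f j) (gaussianReal 0 1)) :
    Integrable (fun z : Fin d → ℝ => ∏ j, f j (z j))
      (Measure.pi fun _ : Fin d => gaussianReal 0 1) := by
  letI : MeasureSpace ℝ := ⟨gaussianReal 0 1⟩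
  haveI : SigmaFinite (volume : Measure ℝ) := by
    change SigmaFinite (gaussianReal 0 1); infer_instance
  exact MeasureTheory.Integrable.fintype_prod hf


lemma mom0' : ∫ x, x ^ (0:ℕ) ∂(gaussianReal 0 1) = 1 := mom0
lemma mom1' : ∫ x, x ^ (1:ℕ) ∂(gaussianReal 0 1) = 0 := mom1
lemma mom2' : ∫ x, x ^ (2:ℕ) ∂(gaussianReal 0 1) = 1 := mom2
lemma mom3' : ∫ x, x ^ (3:ℕ) ∂(gaussianReal 0 1) = 0 := mom3
lemma mom4' : ∫ x, x ^ (4:ℕ) ∂(gaussianReal 0 1) = 3 := mom4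

/-- exponent pattern -/
def expo {d : ℕ} (l l' i j : Fin d) : ℕ :=
  (if j = l then 1 else 0) + (if j = l' then 1 else 0) + (if j = i then 2 else 0)

lemma prod_single {d : ℕ} (z : Fin d → ℝ) (b : Fin d) (n : ℕ) :
    (∏ j, z j ^ (if j = b then n else 0)) = z b ^ n := by
  calc (∏ j, z j ^ (if j = b then n else 0)) = ∏ j, (if j = b then z j ^ n else 1) :=
        Finset.prod_congr rfl fun j _ => by split <;> simp
    _ = z b ^ n := by simp

lemma hprod {d : ℕ} (z : Fin d → ℝ) (l l' i : Fin d) :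
    (∏ j, z j ^ expo l l' i j) = z l * z l' * z i ^ 2 := by
  simp only [expo, pow_add, Finset.prod_mul_distrib]
  rw [prod_single z l 1, prod_single z l' 1, prod_single z i 2, pow_one, pow_one]

/-- For a binary mask `m ∈ {0,1}^d` with exactly `k` ones, `g ∈ ℝ^d` with
`‖m ⊙ g‖² = c ‖g‖²`, and `z̄ = m ⊙ z` with `z ~ N(0, I_d)`,
`E[‖(z̄ᵀg) z̄‖²] = (k + 2) c ‖g‖²`. -/
theorem masked_gaussian_gradient_norm (d k : ℕ) (m g : Fin d → ℝ) (c : ℝ)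
    (hm : ∀ i, m i = 0 ∨ m i = 1)
    (hk : (Finset.univ.filter fun i => m i = 1).card = k)
    (hc : (∑ i, (m i * g i) ^ 2) = c * (∑ i, g i ^ 2)) :
    (∫ z : Fin d → ℝ,
        (∑ l, (m l * z l) * g l) ^ 2 * (∑ i, (m i * z i) ^ 2)
        ∂(Measure.pi fun _ : Fin d => gaussianReal 0 1)) =
      ((k : ℝ) + 2) * c * (∑ i, g i ^ 2) := by
  set γ := gaussianReal 0 1
  set P := Measure.pi fun _ : Fin d => gaussianReal 0 1 with hP
  -- expand the integrand into a sum of monomials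
  have hexp : (fun z : Fin d → ℝ =>
      (∑ l, (m l * z l) * g l) ^ 2 * (∑ i, (m i * z i) ^ 2))
      = fun z => ∑ p : Fin d × Fin d × Fin d,
          (m p.1 * g p.1) * (m p.2.1 * g p.2.1) * (m p.2.2) ^ 2
            * ∏ j, z j ^ expo p.1 p.2.1 p.2.2 j := by
    funext z
    simp only [hprod]
    rw [Fintype.sum_prod_type]
    simp only [Fintype.sum_prod_type]
    rw [pow_two, Finset.sum_mul_sum]
    rw [Finset.sum_mul]
    refine Finset.sum_congr rfl fun l _ => ?_
    rw [Finset.sum_mul]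
    refine Finset.sum_congr rfl fun l' _ => ?_
    rw [Finset.mul_sum]
    refine Finset.sum_congr rfl fun i _ => ?_
    ring
  rw [hexp]
  -- integrability of each monomial
  have hint : ∀ p : Fin d × Fin d × Fin d, Integrable
      (fun z : Fin d → ℝ => (m p.1 * g p.1) * (m p.2.1 * g p.2.1) * (m p.2.2) ^ 2
        * ∏ j, z j ^ expo p.1 p.2.1 p.2.2 j) P := by
    intro p
    exact (integrable_pi_gauss d _ fun j => gauss_integrable _).const_mul _
  rw [integral_finset_sum _ fun p _ => hint p]
  -- value of each monomial integral
  have hval : ∀ l l' i : Fin d, (∏ j, ∫ x, x ^ expo l l' i j ∂γ)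
      = if l = l' then (if i = l then 3 else 1) else 0 := by
    intro l l' i
    by_cases hll : l = l'
    · subst hll
      by_cases hil : i = l
      · subst hil
        rw [if_pos rfl, if_pos rfl]
        have he : ∀ j, expo i i i j = if j = i then 4 else 0 := fun j => by
          by_cases h : j = i <;> simp [expo, h]
        rw [Finset.prod_congr rfl fun j _ => by rw [he j]]
        rw [Finset.prod_eq_single i (fun b _ hb => by rw [if_neg hb, mom0'])
          (fun h => absurd (Finset.mem_univ i) h), if_pos rfl, mom4']
      · rw [if_pos rfl, if_neg hil]
        have hli : ¬ l = i := fun h => hil h.symm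
        refine Finset.prod_eq_one fun j _ => ?_
        by_cases h1 : j = l
        · have : expo l l i j = 2 := by simp [expo, h1, hli]
          rw [this, mom2']
        · by_cases h2 : j = i
          · have : expo l l i j = 2 := by simp [expo, h1, h2, hil]
            rw [this, mom2']
          · have : expo l l i j = 0 := by simp [expo, h1, h2]
            rw [this, mom0']
    · rw [if_neg hll]
      refine Finset.prod_eq_zero (Finset.mem_univ l) ?_
      by_cases h2 : l = i
      · have : expo l l' i l = 3 := by
          simp [expo, hll, h2, show ¬ i = l' from fun h => hll (h2.trans h)]
        rw [this, mom3']
      · have : expo l l' i l = 1 := by simp [expo, hll, h2]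
        rw [this, mom1']
  -- compute each integral
  have hterm : ∀ p : Fin d × Fin d × Fin d,
      (∫ z : Fin d → ℝ, (m p.1 * g p.1) * (m p.2.1 * g p.2.1) * (m p.2.2) ^ 2
        * ∏ j, z j ^ expo p.1 p.2.1 p.2.2 j ∂P)
      = (m p.1 * g p.1) * (m p.2.1 * g p.2.1) * (m p.2.2) ^ 2
        * (if p.1 = p.2.1 then (if p.2.2 = p.1 then 3 else 1) else 0) := by
    intro p
    rw [integral_const_mul, hP, integral_pi_gauss d (fun j x => x ^ expo p.1 p.2.1 p.2.2 j), hval]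
  simp only [hterm]
  -- algebraic computation
  have hK : (∑ i, (m i) ^ 2) = (k : ℝ) := by
    rw [← hk]
    rw [Finset.sum_congr rfl (fun i _ => show (m i)^2 = if m i = 1 then (1:ℝ) else 0 by
      rcases hm i with h | h <;> simp [h])]
    rw [Finset.sum_boole]
  have hma : ∀ l, (m l) ^ 2 * (m l * g l) ^ 2 = (m l * g l) ^ 2 := by
    intro l
    rcases hm l with h | h <;> simp [h]
  rw [Fintype.sum_prod_type]
  simp only [Fintype.sum_prod_type]
  have step : ∀ l : Fin d, (∑ l' : Fin d, ∑ i : Fin d,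
      (m l * g l) * (m l' * g l') * (m i) ^ 2
        * (if l = l' then (if i = l then 3 else 1) else 0))
      = (m l * g l) ^ 2 * ((k:ℝ) + 2 * (m l) ^ 2) := by
    intro l
    rw [Finset.sum_eq_single l (fun b _ hb => Finset.sum_eq_zero fun i _ => by
        rw [if_neg (fun h => hb h.symm), mul_zero])
      (fun h => absurd (Finset.mem_univ l) h)]
    simp only [eq_self_iff_true, if_true]
    rw [Finset.sum_congr rfl fun i _ => show
        (m l * g l) * (m l * g l) * m i ^ 2 * (if i = l then (3:ℝ) else 1)
          = (m l * g l) ^ 2 * m i ^ 2 + (if i = l then (m l * g l) ^ 2 * (m i ^ 2 * 2) else 0)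
        from by split <;> ring]
    rw [Finset.sum_add_distrib, ← Finset.mul_sum, hK, Finset.sum_ite_eq' Finset.univ l]
    simp only [Finset.mem_univ, if_true]
    ring
  rw [Finset.sum_congr rfl fun l _ => step l]
  rw [Finset.sum_congr rfl fun l _ => show
      (m l * g l) ^ 2 * ((k:ℝ) + 2 * (m l) ^ 2) = ((k:ℝ) + 2) * (m l * g l) ^ 2
      from by linear_combination 2 * hma l]
  rw [← Finset.mul_sum, hc]
  ring
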